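/- If E ⊂ ℝ^d is measurable and H¹-thin, then E has Lebesgue measure zero. -/

import Mathlib

open MeasureTheory Metric Set

/-- `E ⊂ ℝ^d` is `H¹`-thin: there exist `C, δ₀ > 0` with
`∫_{E_δ} g² ≤ (1/2)∫ g² + Cδ²∫|∇g|²` for all `δ ∈ (0,δ₀)` and all `g ∈ H¹(ℝ^d)`,
where `E_δ` is the open `δ`-neighborhood of `E`. -/
def H1Thin (d : ℕ) (E : Set (EuclideanSpace ℝ (Fin d))) : Prop :=
  ∃ C > (0 : ℝ), ∃ δ₀ > (0 : ℝ), ∀ δ ∈ Set.Ioo (0 : ℝ) δ₀,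
    ∀ g : EuclideanSpace ℝ (Fin d) → ℝ, Differentiable ℝ g →
      MemLp g 2 volume → MemLp (fun x => ‖fderiv ℝ g x‖) 2 volume →
      ∫ x in Metric.thickening δ E, (g x) ^ 2 ≤
        (1 / 2) * (∫ x, (g x) ^ 2) + C * δ ^ 2 * ∫ x, ‖fderiv ℝ g x‖ ^ 2

/-- If `E ⊂ ℝ^d` is measurable and `H¹`-thin, then `E` has Lebesgue measure zero. -/
theorem stmt_13 (d : ℕ) (E : Set (EuclideanSpace ℝ (Fin d)))
    (hE : MeasurableSet E) (hthin : H1Thin d E) :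
    volume E = 0 := by
  by_contra hne
  obtain ⟨C, hC, δ₀, hδ₀, hineq⟩ := hthin
  set n := Module.finrank ℝ (EuclideanSpace ℝ (Fin d)) with hn
  -- a Lebesgue density point of `E`
  have hres : (volume : Measure (EuclideanSpace ℝ (Fin d))).restrict E ≠ 0 := by
    simpa [Measure.restrict_eq_zero] using hne
  have : (ae ((volume : Measure (EuclideanSpace ℝ (Fin d))).restrict E)).NeBot := ae_neBot.2 hres
  obtain ⟨x₀, hx₀⟩ := (Besicovitch.ae_tendsto_measure_inter_div (volume : Measure (EuclideanSpace ℝ (Fin d))) E).exists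
  -- pick a small radius with density > 3/4
  have h34 : ∀ᶠ r in nhdsWithin (0:ℝ) (Set.Ioi 0),
      ENNReal.ofReal (3/4) <
        volume (E ∩ closedBall x₀ r) / volume (closedBall x₀ r) := by
    apply hx₀.eventually
    apply eventually_gt_nhds
    rw [show (1 : ENNReal) = ENNReal.ofReal 1 by simp]
    exact ENNReal.ofReal_lt_ofReal_iff_of_nonneg (by norm_num) |>.2 (by norm_num)
  obtain ⟨r, hr34, hrpos⟩ := (h34.and self_mem_nhdsWithin).exists
  have hcb_pos : (0:ENNReal) < volume (closedBall x₀ r) := measure_closedBall_pos _ _ hrpos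
  have hcb_fin : volume (closedBall x₀ r) < ⊤ := measure_closedBall_lt_top
  have hlt : ENNReal.ofReal (3/4) * volume (closedBall x₀ r)
      < volume (E ∩ closedBall x₀ r) := by
    rw [← ENNReal.lt_div_iff_mul_lt (Or.inl hcb_pos.ne') (Or.inl hcb_fin.ne)]
    exact hr34
  -- real-number versions
  set B := (volume (ball (0:EuclideanSpace ℝ (Fin d)) 1)).toReal with hBdef
  have hB : 0 < B := ENNReal.toReal_pos (measure_ball_pos _ _ one_pos).ne' measure_ball_lt_top.ne
  have hcball : (volume (closedBall x₀ r)).toReal = r ^ n * B := by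
    rw [Measure.addHaar_closedBall _ _ hrpos.le, ENNReal.toReal_mul,
      ENNReal.toReal_ofReal (pow_nonneg hrpos.le n)]
  have hA : (3/4) * (r ^ n * B) < (volume (E ∩ closedBall x₀ r)).toReal := by
    have h1 : (volume (E ∩ closedBall x₀ r)) ≠ ⊤ :=
      (lt_of_le_of_lt (measure_mono Set.inter_subset_right) hcb_fin).ne
    have := ENNReal.toReal_strict_mono h1 hlt
    rwa [ENNReal.toReal_mul, ENNReal.toReal_ofReal (by norm_num), hcball] at this
  -- choose an outer radius r' with r < r' and r'^n < (3/2) r^n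
  have hrn_pos : 0 < r ^ n := pow_pos hrpos n
  have hcont : ∀ᶠ s in nhdsWithin r (Set.Ioi r), s ^ n < (3/2) * r ^ n ∧ r < s := by
    refine Filter.Eventually.and ?_ (eventually_mem_nhdsWithin.mono fun s hs => hs)
    refine Filter.Eventually.filter_mono nhdsWithin_le_nhds ?_
    have hc : Filter.Tendsto (fun s : ℝ => s ^ n) (nhds r) (nhds (r ^ n)) :=
      (continuous_pow n).continuousAt
    exact hc.eventually (eventually_lt_nhds (by nlinarith))
  obtain ⟨r', hr'lt, hrr'⟩ := hcont.exists
  -- the bump function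
  let f : ContDiffBump x₀ := ⟨r, r', hrpos, hrr'⟩
  have hg_cont : Continuous (fun x => f x) := f.continuous
  have hg_cs : HasCompactSupport (fun x => f x) := f.hasCompactSupport
  have hdiff : Differentiable ℝ (fun x => f x) := (f.contDiff (n := 1)).differentiable (by simp)
  have hmem1 : MemLp (fun x => f x) 2 volume :=
    hg_cont.memLp_of_hasCompactSupport hg_cs
  have hfc : Continuous (fderiv ℝ (fun x => f x)) := by
    exact (f.contDiff (n := 1)).continuous_fderiv (by simp)
  have hfcs : HasCompactSupport (fderiv ℝ (fun x => f x)) := HasCompactSupport.fderiv (𝕜 := ℝ) hg_cs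
  have hmem2 : MemLp (fun x => ‖fderiv ℝ (fun y => f y) x‖) 2 volume :=
    hfc.norm.memLp_of_hasCompactSupport hfcs.norm
  -- integrability of f²
  have hcs2 : HasCompactSupport (fun x => (f x) ^ 2) :=
    hg_cs.comp_left (g := fun y : ℝ => y ^ 2) (by simp)
  have hInt : Integrable (fun x => (f x) ^ 2) (volume : Measure (EuclideanSpace ℝ (Fin d))) :=
    (hg_cont.pow 2).integrable_of_hasCompactSupport hcs2
  -- lower bound for the integral over E ∩ closedBall
  have hlow : (volume (E ∩ closedBall x₀ r)).toReal
      ≤ ∫ x in E ∩ closedBall x₀ r, (f x) ^ 2 := by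
    have heq : ∫ x in E ∩ closedBall x₀ r, (f x) ^ 2
        = ∫ _x in E ∩ closedBall x₀ r, (1:ℝ) := by
      refine setIntegral_congr_fun (hE.inter measurableSet_closedBall) fun x hx => ?_
      rw [f.one_of_mem_closedBall hx.2]; norm_num
    rw [heq, setIntegral_const, smul_eq_mul, mul_one]
    exact le_rfl
  -- upper bound for the total integral
  have hup : ∫ x, (f x) ^ 2 ≤ r' ^ n * B := by
    have hIndInt : Integrable ((ball x₀ r').indicator fun _ => (1:ℝ)) (volume : Measure (EuclideanSpace ℝ (Fin d))) := by
      rw [integrable_indicator_iff measurableSet_ball]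
      exact integrableOn_const measure_ball_lt_top.ne
    have hmono : ∫ x, (f x) ^ 2 ≤ ∫ x, (ball x₀ r').indicator (fun _ => (1:ℝ)) x := by
      refine integral_mono hInt hIndInt fun x => ?_
      by_cases hx : x ∈ ball x₀ r'
      · rw [Set.indicator_of_mem hx]
        exact pow_le_one₀ f.nonneg f.le_one
      · rw [Set.indicator_of_notMem hx]
        have : f x = 0 := by
          have := f.support_eq
          by_contra h
          exact hx (this ▸ Function.mem_support.2 h)
        simp [this]
    refine hmono.trans ?_
    rw [integral_indicator_const _ measurableSet_ball, smul_eq_mul, mul_one]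
    have h1 : volume (ball x₀ r') ≤ volume (closedBall x₀ r') :=
      measure_mono ball_subset_closedBall
    have h2 : (volume (closedBall x₀ r')).toReal = r' ^ n * B := by
      rw [Measure.addHaar_closedBall _ _ (hrpos.trans hrr').le, ENNReal.toReal_mul,
        ENNReal.toReal_ofReal (pow_nonneg (hrpos.trans hrr').le n)]
    calc (volume (ball x₀ r')).toReal ≤ (volume (closedBall x₀ r')).toReal :=
          ENNReal.toReal_mono measure_closedBall_lt_top.ne h1
      _ = r' ^ n * B := h2
  -- the positive gap
  set ε : ℝ := (∫ x in E ∩ closedBall x₀ r, (f x) ^ 2) - (1/2) * ∫ x, (f x) ^ 2 with hεdef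
  have hε : 0 < ε := by
    have h1 : (1/2) * (∫ x, (f x) ^ 2) ≤ (1/2) * (r' ^ n * B) := by linarith
    have h2 : (1/2) * (r' ^ n * B) < (3/4) * (r ^ n * B) := by nlinarith
    have h3 : (3/4) * (r ^ n * B) < ∫ x in E ∩ closedBall x₀ r, (f x) ^ 2 :=
      lt_of_lt_of_le hA hlow
    simp only [hεdef]; linarith
  -- choose δ small
  set K : ℝ := ∫ x, ‖fderiv ℝ (fun y => f y) x‖ ^ 2 with hKdef
  have htend : Filter.Tendsto (fun δ : ℝ => C * δ ^ 2 * K) (nhds 0) (nhds 0) := by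
    have : Continuous (fun δ : ℝ => C * δ ^ 2 * K) :=
      (continuous_const.mul (continuous_pow 2)).mul continuous_const
    simpa using this.tendsto 0
  have hev : ∀ᶠ δ in nhdsWithin (0:ℝ) (Set.Ioi 0),
      (C * δ ^ 2 * K < ε ∧ δ < δ₀) ∧ δ ∈ Set.Ioi (0:ℝ) := by
    refine Filter.Eventually.and (Filter.Eventually.filter_mono nhdsWithin_le_nhds ?_)
      eventually_mem_nhdsWithin
    exact (htend.eventually (eventually_lt_nhds hε)).and (eventually_lt_nhds hδ₀)
  obtain ⟨δ, ⟨hδK, hδlt⟩, hδpos⟩ := hev.exists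
  -- apply the thinness inequality
  have hmain := hineq δ ⟨hδpos, hδlt⟩ (fun x => f x) hdiff hmem1 hmem2
  have hsub : ∫ x in E ∩ closedBall x₀ r, (f x) ^ 2
      ≤ ∫ x in thickening δ E, (f x) ^ 2 := by
    refine setIntegral_mono_set hInt.integrableOn
      (Filter.Eventually.of_forall fun x => sq_nonneg _) ?_
    exact Filter.Eventually.of_forall
      (Set.inter_subset_left.trans (self_subset_thickening hδpos E))
  beta_reduce at hmain
  rw [← hKdef] at hmain
  have t1 := hsub.trans hmain
  rw [hεdef] at hδK
  linarith [t1, hδK]
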